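/- Let V be a 4-dimensional real vector space, h a symmetric bilinear form of signature (0,1,1,1) with radical spanned by the nonzero vector ξ, and t ∈ V* a covector with t(ξ)=1. Then there is a unique symmetric bilinear form ĥ on V* such that ĥ(t,·)=0 and such that the composite map V → V* → V given by v ↦ ĥ(h(v,·),·)† equals v ↦ v − t(v)·ξ (i.e. h followed by ĥ is the projection δ − t⊗ξ). -/

import Mathlib

/-- Signature (0,1,1,1). -/
def IsSig0111 {V : Type*} [AddCommGroup V] [Module ℝ V]
    (h : V →ₗ[ℝ] V →ₗ[ℝ] ℝ) : Prop :=
  ∃ ζ : Fin 4 → V, LinearIndependent ℝ ζ ∧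
    ∀ i j, h (ζ i) (ζ j) = if i = j ∧ i ≠ 0 then 1 else 0

/-- Proposition 2, pointwise: given a unit timelike covector t (t ξ = 1), there
is a unique symmetric bilinear form ĥ on V* with ĥ(t,·)=0 and
h_{ab} ĥ^{bc} = δ^c_a − t_a ξ^c, the latter stated as
ĥ(h(v,·), σ) = σ(v) − t(v)·σ(ξ) for all v ∈ V, σ ∈ V*. -/
theorem exists_unique_spatial_projection_field
    (V : Type*) [AddCommGroup V] [Module ℝ V]
    (hdim : Module.finrank ℝ V = 4)
    (h : V →ₗ[ℝ] V →ₗ[ℝ] ℝ)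
    (hsymm : ∀ v w, h v w = h w v)
    (hsig : IsSig0111 h)
    (ξ : V) (hξ0 : ξ ≠ 0) (hξ : h ξ = 0)
    (t : Module.Dual ℝ V) (htξ : t ξ = 1) :
    ∃! hhat : Module.Dual ℝ V →ₗ[ℝ] Module.Dual ℝ V →ₗ[ℝ] ℝ,
      (∀ σ τ, hhat σ τ = hhat τ σ) ∧
      (∀ σ, hhat t σ = 0) ∧
      (∀ (v : V) (σ : Module.Dual ℝ V), hhat (h v) σ = σ v - t v * σ ξ) := by
  obtain ⟨ζ, hζli, hζh⟩ := hsig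
  have hcard : Fintype.card (Fin 4) = Module.finrank ℝ V := by simp [hdim]
  let b : Module.Basis (Fin 4) ℝ V := basisOfLinearIndependentOfCardEqFinrank hζli hcard
  have hbeq : ∀ i, b i = ζ i := fun i => by
    simp [b, coe_basisOfLinearIndependentOfCardEqFinrank]
  have hζh' : ∀ j, j ≠ 0 → ∀ i, h (ζ i) (ζ j) = if i = j then 1 else 0 := by
    intro j hj i
    rw [hζh]
    by_cases hij : i = j <;> simp [hij, hj]
  have hrepr : ∀ (w : V) (j : Fin 4), j ≠ 0 → h w (ζ j) = b.repr w j := by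
    intro w j hj
    conv_lhs => rw [← b.sum_repr w]
    simp only [map_sum, map_smul, LinearMap.sum_apply, LinearMap.smul_apply, hbeq,
      hζh' j hj, smul_eq_mul, mul_ite, mul_one, mul_zero]
    simp
  have hvξ : ∀ v, h v ξ = 0 := fun v => by rw [hsymm]; simp [hξ]
  have hξrep : ∀ j, j ≠ 0 → b.repr ξ j = 0 := by
    intro j hj
    rw [← hrepr ξ j hj, hξ]
    simp
  have hξeq : ξ = b.repr ξ 0 • ζ 0 := by
    conv_lhs => rw [← b.sum_repr ξ]
    rw [Fin.sum_univ_four]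
    rw [hξrep 1 (by decide), hξrep 2 (by decide), hξrep 3 (by decide)]
    simp [hbeq]
  have ha0 : b.repr ξ 0 ≠ 0 := by
    intro hc
    rw [hc, zero_smul] at hξeq
    exact hξ0 hξeq
  have htζ0 : t (ζ 0) * b.repr ξ 0 = 1 := by
    have := htξ
    rw [hξeq] at this
    simpa [mul_comm] using this
  have hζ0 : ζ 0 = t (ζ 0) • ξ := by
    rw [hξeq, smul_smul, htζ0, one_smul]
  -- the spatial vectors
  set ζ' : Fin 4 → V := fun i => ζ i - t (ζ i) • ξ with hζ'def
  have hζ'0 : ζ' 0 = 0 := by simp [hζ'def, ← hζ0]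
  have htζ' : ∀ i, t (ζ' i) = 0 := by
    intro i; simp [hζ'def, htξ]
  -- the candidate
  set hhat : Module.Dual ℝ V →ₗ[ℝ] Module.Dual ℝ V →ₗ[ℝ] ℝ :=
    LinearMap.mk₂ ℝ (fun σ τ => ∑ i, σ (ζ' i) * τ (ζ' i))
      (fun σ₁ σ₂ τ => by simp [add_mul, Finset.sum_add_distrib])
      (fun c σ τ => by simp [Finset.mul_sum, mul_assoc])
      (fun σ τ₁ τ₂ => by simp [mul_add, Finset.sum_add_distrib])
      (fun c σ τ => by
        simp [Finset.mul_sum, mul_assoc, mul_left_comm]) with hhatdef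
  have happ : ∀ σ τ, hhat σ τ = ∑ i, σ (ζ' i) * τ (ζ' i) := fun σ τ => rfl
  have hsym : ∀ σ τ, hhat σ τ = hhat τ σ := by
    intro σ τ; rw [happ, happ]
    exact Finset.sum_congr rfl fun i _ => mul_comm _ _
  have ht0 : ∀ σ, hhat t σ = 0 := by
    intro σ; rw [happ]
    simp [htζ']
  have hmain : ∀ (v : V) (σ : Module.Dual ℝ V), hhat (h v) σ = σ v - t v * σ ξ := by
    intro v σ
    have hsum : v - t v • ξ = ∑ i, b.repr v i • ζ' i := by
      have h1 : (∑ i, b.repr v i • ζ' i)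
          = (∑ i, b.repr v i • ζ i) - (∑ i, b.repr v i * t (ζ i)) • ξ := by
        simp [hζ'def, smul_sub, smul_smul, Finset.sum_sub_distrib, Finset.sum_smul]
      have h2 : (∑ i, b.repr v i • ζ i) = v := by
        conv_rhs => rw [← b.sum_repr v]
        simp [hbeq]
      have h3 : (∑ i, b.repr v i * t (ζ i)) = t v := by
        conv_rhs => rw [← b.sum_repr v]
        simp [hbeq, Finset.mul_sum]
      rw [h1, h2, h3]
    have hRHS : σ v - t v * σ ξ = σ (v - t v • ξ) := by simp
    rw [hRHS, hsum, map_sum, happ]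
    refine Finset.sum_congr rfl fun i _ => ?_
    by_cases hi : i = 0
    · simp [hi, hζ'0]
    · have hζ'i : h v (ζ' i) = b.repr v i := by
        simp [hζ'def, map_sub, hvξ, hrepr v i hi]
      rw [hζ'i, map_smul, smul_eq_mul]
  -- span fact for uniqueness
  have hspan : ∀ σ : Module.Dual ℝ V, ∃ (c : ℝ) (v : V), σ = c • t + h v := by
    intro σ
    refine ⟨σ ξ, ∑ i, (if i = 0 then 0 else (σ (ζ i) - σ ξ * t (ζ i))) • ζ i, ?_⟩
    apply b.ext
    intro j
    rw [hbeq]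
    by_cases hj : j = 0
    · subst hj
      have hv0 : h (∑ i, (if i = 0 then 0 else (σ (ζ i) - σ ξ * t (ζ i))) • ζ i) (ζ 0) = 0 := by
        simp only [map_sum, map_smul, LinearMap.sum_apply, LinearMap.smul_apply]
        refine Finset.sum_eq_zero fun i _ => ?_
        by_cases hi : i = 0
        · simp [hi]
        · rw [hsymm]
          have : h (ζ 0) (ζ i) = 0 := by rw [hζh]; simp
          simp [this]
      simp only [LinearMap.add_apply, LinearMap.smul_apply, hv0, add_zero, smul_eq_mul]
      rw [hζ0]
      simp only [map_smul, smul_eq_mul, htξ]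
      ring
    · have hvj : h (∑ i, (if i = 0 then 0 else (σ (ζ i) - σ ξ * t (ζ i))) • ζ i) (ζ j)
          = σ (ζ j) - σ ξ * t (ζ j) := by
        simp only [map_sum, map_smul, LinearMap.sum_apply, LinearMap.smul_apply,
          hζh' j hj, smul_eq_mul, mul_ite, mul_one, mul_zero]
        rw [Finset.sum_eq_single j]
        · simp [hj]
        · intro i _ hij
          simp [if_neg hij]
        · simp
      simp only [LinearMap.add_apply, LinearMap.smul_apply, hvj, smul_eq_mul]
      ring
  refine ⟨hhat, ⟨hsym, ht0, hmain⟩, ?_⟩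
  rintro g ⟨gsym, gt0, gmain⟩
  ext σ τ
  obtain ⟨c, v, hcv⟩ := hspan σ
  rw [hcv]
  simp only [map_add, map_smul, LinearMap.add_apply, LinearMap.smul_apply, smul_eq_mul,
    gt0, gmain, ht0, hmain]
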